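/- arXiv:1609.08828 — 2 statements merged into one kernel-verified Lean document; each statement's English description precedes it below -/
import Mathlib

section
/- Let B be a mutation-cyclic real skew-symmetric 3×3 matrix whose mutation class is finite. Then |b_12| = |b_23| = |b_31| = 2, i.e. B is the Markov quiver (2,2,2). -/
open Matrix
noncomputable section

/-- Mutation of a real `3 × 3` matrix in direction `k`. -/
def mutate (k : Fin 3) (B : Matrix (Fin 3) (Fin 3) ℝ) : Matrix (Fin 3) (Fin 3) ℝ :=
  Matrix.of fun i j =>
    if i = k ∨ j = k then -B i j
    else B i j + (|B i k| * B k j + B i k * |B k j|) / 2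

/-- One step of mutation equivalence: a single mutation, or a simultaneous
permutation of the index set. -/
def MutationStep (B B' : Matrix (Fin 3) (Fin 3) ℝ) : Prop :=
  (∃ k : Fin 3, B' = mutate k B) ∨
  (∃ σ : Equiv.Perm (Fin 3), B' = Matrix.of fun i j => B (σ i) (σ j))

/-- Mutation equivalence: a finite sequence of mutations and simultaneous permutations. -/
def MutationEquiv : Matrix (Fin 3) (Fin 3) ℝ → Matrix (Fin 3) (Fin 3) ℝ → Prop :=
  Relation.ReflTransGen MutationStep

/-- `B` is cyclic if `b₁₂, b₂₃, b₃₁` are all nonzero and of the same sign. -/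
def IsCyclicMat (B : Matrix (Fin 3) (Fin 3) ℝ) : Prop :=
  (0 < B 0 1 ∧ 0 < B 1 2 ∧ 0 < B 2 0) ∨ (B 0 1 < 0 ∧ B 1 2 < 0 ∧ B 2 0 < 0)

instance : DecidablePred IsCyclicMat := fun B => by
  unfold IsCyclicMat; exact inferInstance

/-- `B` is mutation-cyclic if every matrix in its mutation class is cyclic. -/
def IsMutationCyclic (B : Matrix (Fin 3) (Fin 3) ℝ) : Prop :=
  ∀ B', MutationEquiv B B' → IsCyclicMat B'

/-- `B` is mutation-acyclic if some matrix in its mutation class is acyclic. -/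
def IsMutationAcyclic (B : Matrix (Fin 3) (Fin 3) ℝ) : Prop :=
  ∃ B', MutationEquiv B B' ∧ ¬ IsCyclicMat B'

/-- The Markov constant `C(B)`. -/
def markov (B : Matrix (Fin 3) (Fin 3) ℝ) : ℝ :=
  (B 0 1) ^ 2 + (B 1 2) ^ 2 + (B 2 0) ^ 2 -
    (if IsCyclicMat B then 1 else -1) * |B 0 1 * B 1 2 * B 2 0|

/-- The Lorentzian symmetric bilinear form on `ℝ^{2,1}`. -/
def lform (x y : Fin 3 → ℝ) : ℝ := x 0 * y 0 + x 1 * y 1 - x 2 * y 2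

/-- A realization of `B` by reflections: a triple of vectors of square norm `2`
whose pairwise inner products have the absolute values `|b_ij|`, with the parity
condition on the number of positive inner products. -/
def ReflRealization {V : Type*} [AddCommGroup V] [Module ℝ V]
    (f : V →ₗ[ℝ] V →ₗ[ℝ] ℝ) (B : Matrix (Fin 3) (Fin 3) ℝ) (v : Fin 3 → V) : Prop :=
  (∀ i, f (v i) (v i) = 2) ∧
  (∀ i j, i ≠ j → |f (v i) (v j)| = |B i j|) ∧
  ((∀ i j, i ≠ j → f (v i) (v j) ≠ 0) →
    (Finset.univ.filter
        (fun p : Fin 3 × Fin 3 => p.1 < p.2 ∧ 0 < f (v p.1) (v p.2))).card % 2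
      = if IsCyclicMat B then 1 else 0)

/-- Mutation of a triple of vectors by partial reflections. -/
def mutateVecRefl {V : Type*} [AddCommGroup V] [Module ℝ V]
    (f : V →ₗ[ℝ] V →ₗ[ℝ] ℝ) (B : Matrix (Fin 3) (Fin 3) ℝ) (k : Fin 3) (v : Fin 3 → V) :
    Fin 3 → V :=
  fun j =>
    if j = k then -v k
    else if 0 < B j k then v j - f (v j) (v k) • v k
    else v j

/-- A realization of `B` by `π`-rotations: a triple of vectors in `ℝ^{2,1}` of square
norm `-2` with pairwise inner products `-|b₁₂|, -|b₂₃|, -|b₃₁|`. -/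
def RotRealization (B : Matrix (Fin 3) (Fin 3) ℝ) (v : Fin 3 → (Fin 3 → ℝ)) : Prop :=
  (∀ i, lform (v i) (v i) = -2) ∧
  lform (v 0) (v 1) = -|B 0 1| ∧ lform (v 1) (v 2) = -|B 1 2| ∧
  lform (v 2) (v 0) = -|B 2 0|

/-- Mutation of a triple of points by partial `π`-rotations. -/
def mutateVecRot (B : Matrix (Fin 3) (Fin 3) ℝ) (k : Fin 3) (v : Fin 3 → (Fin 3 → ℝ)) :
    Fin 3 → (Fin 3 → ℝ) :=
  fun j => if 0 < B j k then -v j - lform (v j) (v k) • v k else v j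


namespace MarkovAux

/-- The standard cyclic matrix with sign `e` and weights `a, b, c`. -/
def M (e a b c : ℝ) : Matrix (Fin 3) (Fin 3) ℝ :=
  !![0, e*a, -(e*c); -(e*a), 0, e*b; e*c, -(e*b), 0]

lemma mut0 {e a b c : ℝ} (he : |e| = 1) (ha : 0 ≤ a) (hc : 0 ≤ c) :
    mutate 0 (M e a b c) = M (-e) a (a*c - b) c := by
  have h1 : ∀ x : ℝ, 0 ≤ x → |e * x| = x := fun x hx => by
    rw [abs_mul, he, one_mul, abs_of_nonneg hx]
  ext i j
  fin_cases i <;> fin_cases j <;>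
    simp [mutate, M, h1 a ha, h1 c hc, abs_neg] <;> ring

lemma mut1 {e a b c : ℝ} (he : |e| = 1) (ha : 0 ≤ a) (hb : 0 ≤ b) :
    mutate 1 (M e a b c) = M (-e) a b (a*b - c) := by
  have h1 : ∀ x : ℝ, 0 ≤ x → |e * x| = x := fun x hx => by
    rw [abs_mul, he, one_mul, abs_of_nonneg hx]
  ext i j
  fin_cases i <;> fin_cases j <;>
    simp [mutate, M, h1 a ha, h1 b hb, abs_neg] <;> ring

lemma mut2 {e a b c : ℝ} (he : |e| = 1) (hb : 0 ≤ b) (hc : 0 ≤ c) :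
    mutate 2 (M e a b c) = M (-e) (b*c - a) b c := by
  have h1 : ∀ x : ℝ, 0 ≤ x → |e * x| = x := fun x hx => by
    rw [abs_mul, he, one_mul, abs_of_nonneg hx]
  ext i j
  fin_cases i <;> fin_cases j <;>
    simp [mutate, M, h1 b hb, h1 c hc, abs_neg] <;> ring

lemma M01 (e a b c : ℝ) : M e a b c 0 1 = e * a := by simp [M]
lemma M12 (e a b c : ℝ) : M e a b c 1 2 = e * b := by simp [M]
lemma M20 (e a b c : ℝ) : M e a b c 2 0 = e * c := by simp [M]

lemma cyc_signs {e a b c : ℝ} (he : |e| = 1) (h : IsCyclicMat (M e a b c)) :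
    (0 < a ∧ 0 < b ∧ 0 < c) ∨ (a < 0 ∧ b < 0 ∧ c < 0) := by
  rw [IsCyclicMat, M01, M12, M20] at h
  rcases (abs_eq (by norm_num : (0:ℝ) ≤ 1)).1 he with he1 | he1 <;> subst he1 <;>
    rcases h with ⟨h1, h2, h3⟩ | ⟨h1, h2, h3⟩
  · exact Or.inl ⟨by linarith, by linarith, by linarith⟩
  · exact Or.inr ⟨by linarith, by linarith, by linarith⟩
  · exact Or.inr ⟨by nlinarith, by nlinarith, by nlinarith⟩
  · exact Or.inl ⟨by nlinarith, by nlinarith, by nlinarith⟩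

/-- States: sign and three weights. -/
abbrev St := ℝ × ℝ × ℝ × ℝ

def Ms (t : St) : Matrix (Fin 3) (Fin 3) ℝ := M t.1 t.2.1 t.2.2.1 t.2.2.2

def sumT (t : St) : ℝ := t.2.1 + t.2.2.1 + t.2.2.2

def tmut (k : Fin 3) (t : St) : St :=
  if k = 0 then (-t.1, t.2.1, t.2.1 * t.2.2.2 - t.2.2.1, t.2.2.2)
  else if k = 1 then (-t.1, t.2.1, t.2.2.1, t.2.1 * t.2.2.1 - t.2.2.2)
  else (-t.1, t.2.2.1 * t.2.2.2 - t.2.1, t.2.2.1, t.2.2.2)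

def pick (t : St) : Fin 3 :=
  if 2 ≤ t.2.1 ∧ 2 ≤ t.2.2.1 ∧ 2 ≤ t.2.2.2 then
    if t.2.1 ≤ t.2.2.1 ∧ t.2.1 ≤ t.2.2.2 then 2 else if t.2.2.1 ≤ t.2.2.2 then 0 else 1
  else
    if t.2.2.1 ≤ t.2.1 ∧ t.2.2.2 ≤ t.2.1 then 2 else if t.2.2.2 ≤ t.2.2.1 then 0 else 1

def nxt (t : St) : St := tmut (pick t) t

lemma mut_eq (k : Fin 3) {e a b c : ℝ} (he : |e| = 1) (ha : 0 ≤ a) (hb : 0 ≤ b) (hc : 0 ≤ c) :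
    mutate k (Ms (e, a, b, c)) = Ms (tmut k (e, a, b, c)) := by
  fin_cases k
  · simpa [tmut, Ms] using mut0 (a := a) (b := b) (c := c) he ha hc
  · simpa [tmut, Ms] using mut1 (a := a) (b := b) (c := c) he ha hb
  · simpa [tmut, Ms] using mut2 (a := a) (b := b) (c := c) he hb hc

lemma asc_step (t : St) (h2 : 2 ≤ t.2.1 ∧ 2 ≤ t.2.2.1 ∧ 2 ≤ t.2.2.2) (hs : 6 < sumT t) :
    (2 ≤ (nxt t).2.1 ∧ 2 ≤ (nxt t).2.2.1 ∧ 2 ≤ (nxt t).2.2.2) ∧ sumT t < sumT (nxt t) := by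
  obtain ⟨e, a, b, c⟩ := t
  obtain ⟨ha2, hb2, hc2⟩ := h2
  dsimp only at ha2 hb2 hc2
  simp only [sumT] at hs ⊢
  by_cases h1 : a ≤ b ∧ a ≤ c
  · have hp : pick (e, a, b, c) = 2 := by simp [pick, ha2, hb2, hc2, h1]
    have hn : nxt (e, a, b, c) = (-e, b*c - a, b, c) := by rw [nxt, hp]; simp [tmut]
    rw [hn]
    dsimp only
    have key : 2 * a < b * c := by
      obtain ⟨hab, hac⟩ := h1
      rcases lt_or_ge 2 b with h | h
      · nlinarith
      · have hb' : b = 2 := le_antisymm h hb2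
        rcases lt_or_eq_of_le hac with h' | h'
        · nlinarith
        · subst h'; subst hb'; linarith
    refine ⟨⟨by nlinarith, hb2, hc2⟩, by nlinarith⟩
  · have hlt : b < a ∨ c < a := by
      rcases not_and_or.1 h1 with h | h
      · exact Or.inl (lt_of_not_ge h)
      · exact Or.inr (lt_of_not_ge h)
    by_cases h2' : b ≤ c
    · have hp : pick (e, a, b, c) = 0 := by simp [pick, ha2, hb2, hc2, h1, h2']
      have hn : nxt (e, a, b, c) = (-e, a, a*c - b, c) := by rw [nxt, hp]; simp [tmut]
      rw [hn]
      dsimp only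
      have hba : b < a := by rcases hlt with h | h; exact h; linarith
      have key : 2 * b < a * c := by nlinarith
      exact ⟨⟨ha2, by nlinarith, hc2⟩, by nlinarith⟩
    · have hp : pick (e, a, b, c) = 1 := by simp [pick, ha2, hb2, hc2, h1, h2']
      have hn : nxt (e, a, b, c) = (-e, a, b, a*b - c) := by rw [nxt, hp]; simp [tmut]
      rw [hn]
      dsimp only
      have hcb : c < b := lt_of_not_ge h2'
      have hca : c < a := by rcases hlt with h | h; linarith; exact h
      have key : 2 * c < a * b := by nlinarith
      exact ⟨⟨ha2, hb2, by nlinarith⟩, by nlinarith⟩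

lemma desc_step (t : St) (ha : 0 < t.2.1) (hb : 0 < t.2.2.1) (hc : 0 < t.2.2.2)
    (h2 : t.2.1 < 2 ∨ t.2.2.1 < 2 ∨ t.2.2.2 < 2) :
    ((nxt t).2.1 < 2 ∨ (nxt t).2.2.1 < 2 ∨ (nxt t).2.2.2 < 2) ∧ sumT (nxt t) < sumT t := by
  obtain ⟨e, a, b, c⟩ := t
  dsimp only at ha hb hc h2
  have hcond : ¬ (2 ≤ a ∧ 2 ≤ b ∧ 2 ≤ c) := by
    rintro ⟨x, y, z⟩; rcases h2 with h | h | h <;> linarith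
  simp only [sumT]
  by_cases h1 : b ≤ a ∧ c ≤ a
  · have hp : pick (e, a, b, c) = 2 := by simp [pick, hcond, h1]
    have hn : nxt (e, a, b, c) = (-e, b*c - a, b, c) := by rw [nxt, hp]; simp [tmut]
    rw [hn]
    dsimp only
    obtain ⟨hba, hca⟩ := h1
    have hsmall : b < 2 ∨ c < 2 := by
      rcases h2 with h | h | h
      · exact Or.inl (by linarith)
      · exact Or.inl h
      · exact Or.inr h
    have key : b * c < 2 * a := by
      rcases hsmall with h | h
      · nlinarith
      · nlinarith
    exact ⟨Or.inr (by tauto), by nlinarith⟩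
  · have hlt : a < b ∨ a < c := by
      rcases not_and_or.1 h1 with h | h
      · exact Or.inl (lt_of_not_ge h)
      · exact Or.inr (lt_of_not_ge h)
    by_cases h2' : c ≤ b
    · have hp : pick (e, a, b, c) = 0 := by simp [pick, hcond, h1, h2']
      have hn : nxt (e, a, b, c) = (-e, a, a*c - b, c) := by rw [nxt, hp]; simp [tmut]
      rw [hn]
      dsimp only
      have hab : a < b := by rcases hlt with h | h; exact h; linarith
      have hsmall : a < 2 ∨ c < 2 := by
        rcases h2 with h | h | h
        · exact Or.inl h
        · exact Or.inl (by linarith)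
        · exact Or.inr h
      have key : a * c < 2 * b := by
        rcases hsmall with h | h
        · nlinarith
        · nlinarith
      refine ⟨?_, by nlinarith⟩
      rcases hsmall with h | h
      · exact Or.inl h
      · exact Or.inr (Or.inr h)
    · have hp : pick (e, a, b, c) = 1 := by simp [pick, hcond, h1, h2']
      have hn : nxt (e, a, b, c) = (-e, a, b, a*b - c) := by rw [nxt, hp]; simp [tmut]
      rw [hn]
      dsimp only
      have hbc : b < c := lt_of_not_ge h2'
      have hac : a < c := by rcases hlt with h | h; linarith; exact h
      have hsmall : a < 2 ∨ b < 2 := by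
        rcases h2 with h | h | h
        · exact Or.inl h
        · exact Or.inr h
        · exact Or.inr (by linarith)
      have key : a * b < 2 * c := by
        rcases hsmall with h | h
        · nlinarith
        · nlinarith
      refine ⟨?_, by nlinarith⟩
      rcases hsmall with h | h
      · exact Or.inl h
      · exact Or.inr (Or.inl h)

lemma exists_repr (B : Matrix (Fin 3) (Fin 3) ℝ) (hB : Bᵀ = -B) (hcB : IsCyclicMat B) :
    ∃ e a b c : ℝ, |e| = 1 ∧ 0 < a ∧ 0 < b ∧ 0 < c ∧ B = M e a b c ∧
      a = |B 0 1| ∧ b = |B 1 2| ∧ c = |B 2 0| := by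
  have key : ∀ i j, B j i = -B i j := by
    intro i j
    have := congrFun (congrFun hB i) j
    simpa [Matrix.transpose_apply] using this
  have hd : ∀ i, B i i = 0 := fun i => by have := key i i; linarith
  rcases hcB with ⟨h1, h2, h3⟩ | ⟨h1, h2, h3⟩
  · refine ⟨1, B 0 1, B 1 2, B 2 0, by norm_num, h1, h2, h3, ?_, (abs_of_pos h1).symm,
      (abs_of_pos h2).symm, (abs_of_pos h3).symm⟩
    ext i j
    fin_cases i <;> fin_cases j <;>
      simp [M, hd 0, hd 1, hd 2, key 0 1, key 1 2, key 2 0]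
  · refine ⟨-1, -B 0 1, -B 1 2, -B 2 0, by norm_num, by linarith, by linarith, by linarith, ?_,
      (abs_of_neg h1).symm, (abs_of_neg h2).symm, (abs_of_neg h3).symm⟩
    ext i j
    fin_cases i <;> fin_cases j <;>
      simp [M, hd 0, hd 1, hd 2, key 0 1, key 1 2, key 2 0]

def Inv (B : Matrix (Fin 3) (Fin 3) ℝ) (t : St) : Prop :=
  |t.1| = 1 ∧ 0 < t.2.1 ∧ 0 < t.2.2.1 ∧ 0 < t.2.2.2 ∧ MutationEquiv B (Ms t)

lemma pos_tmut (k : Fin 3) {e a b c : ℝ} (he : |e| = 1) (ha : 0 < a) (hb : 0 < b) (hc : 0 < c)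
    (h : IsCyclicMat (Ms (tmut k (e, a, b, c)))) :
    |(tmut k (e, a, b, c)).1| = 1 ∧ 0 < (tmut k (e, a, b, c)).2.1 ∧
      0 < (tmut k (e, a, b, c)).2.2.1 ∧ 0 < (tmut k (e, a, b, c)).2.2.2 := by
  have he' : |(-e : ℝ)| = 1 := by rwa [abs_neg]
  by_cases hk0 : k = 0
  · have ht : tmut k (e, a, b, c) = (-e, a, a*c - b, c) := by simp [tmut, hk0]
    rw [ht] at h ⊢
    simp only [Ms] at h
    dsimp only
    rcases cyc_signs he' h with ⟨x, y, z⟩ | ⟨x, y, z⟩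
    · exact ⟨he', x, y, z⟩
    · exact absurd x (by linarith)
  by_cases hk1 : k = 1
  · have ht : tmut k (e, a, b, c) = (-e, a, b, a*b - c) := by simp [tmut, hk0, hk1]
    rw [ht] at h ⊢
    simp only [Ms] at h
    dsimp only
    rcases cyc_signs he' h with ⟨x, y, z⟩ | ⟨x, y, z⟩
    · exact ⟨he', x, y, z⟩
    · exact absurd x (by linarith)
  · have ht : tmut k (e, a, b, c) = (-e, b*c - a, b, c) := by simp [tmut, hk0, hk1]
    rw [ht] at h ⊢
    simp only [Ms] at h
    dsimp only
    rcases cyc_signs he' h with ⟨x, y, z⟩ | ⟨x, y, z⟩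
    · exact ⟨he', x, y, z⟩
    · exact absurd y (by linarith)

lemma inv_step (B : Matrix (Fin 3) (Fin 3) ℝ) (hcyc : IsMutationCyclic B)
    (t : St) (h : Inv B t) : Inv B (nxt t) := by
  obtain ⟨e, a, b, c⟩ := t
  obtain ⟨he, ha, hb, hc, heq⟩ := h
  dsimp only at he ha hb hc
  have hmut : mutate (pick (e, a, b, c)) (Ms (e, a, b, c)) = Ms (nxt (e, a, b, c)) :=
    mut_eq _ he ha.le hb.le hc.le
  have heq' : MutationEquiv B (Ms (nxt (e, a, b, c))) :=
    heq.tail (Or.inl ⟨_, hmut.symm⟩)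
  have hcyc' : IsCyclicMat (Ms (nxt (e, a, b, c))) := hcyc _ heq'
  obtain ⟨x1, x2, x3, x4⟩ := pos_tmut (pick (e, a, b, c)) he ha hb hc hcyc'
  exact ⟨x1, x2, x3, x4, heq'⟩

lemma sum_abs_eq {e a b c : ℝ} (he : |e| = 1) (ha : 0 ≤ a) (hb : 0 ≤ b) (hc : 0 ≤ c) :
    |M e a b c 0 1| + |M e a b c 1 2| + |M e a b c 2 0| = a + b + c := by
  rw [M01, M12, M20, abs_mul, abs_mul, abs_mul, he, one_mul, one_mul, one_mul,
    abs_of_nonneg ha, abs_of_nonneg hb, abs_of_nonneg hc]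

end MarkovAux


open MarkovAux in
/-- a mutation-cyclic matrix of finite mutation type is the Markov
quiver `(2,2,2)`. -/
theorem mutation_cyclic_finite_is_markov_quiver
    (B : Matrix (Fin 3) (Fin 3) ℝ) (hB : Bᵀ = -B)
    (hcyc : IsMutationCyclic B)
    (hfin : {B' | MutationEquiv B B'}.Finite) :
    |B 0 1| = 2 ∧ |B 1 2| = 2 ∧ |B 2 0| = 2 := by
  have hc0 : IsCyclicMat B := hcyc B Relation.ReflTransGen.refl
  obtain ⟨e, a, b, c, he, ha, hb, hc, hBe, hA, hBv, hC⟩ := exists_repr B hB hc0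
  rw [← hA, ← hBv, ← hC]
  by_contra hne
  set t0 : St := (e, a, b, c) with ht0
  set seq : ℕ → St := fun n => nxt^[n] t0 with hseqdef
  have hseq0 : seq 0 = t0 := rfl
  have hseqS : ∀ n, seq (n + 1) = nxt (seq n) := fun n =>
    Function.iterate_succ_apply' nxt n t0
  have hinv : ∀ n, Inv B (seq n) := by
    intro n
    induction n with
    | zero =>
      refine ⟨he, ha, hb, hc, ?_⟩
      rw [hseq0]
      show MutationEquiv B (Ms t0)
      have : Ms t0 = B := by rw [hBe]; rfl
      rw [this]
      exact Relation.ReflTransGen.refl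
    | succ n ih =>
      rw [hseqS]
      exact inv_step B hcyc _ ih
  -- the matrices in the sequence are pairwise distinct as soon as sums are injective
  have hfinal : Function.Injective (fun n => sumT (seq n)) → False := by
    intro hinj
    refine hfin.not_infinite (Set.infinite_of_injective_forall_mem
      (f := fun n => Ms (seq n)) ?_ (fun n => (hinv n).2.2.2.2))
    intro m n hmn
    apply hinj
    obtain ⟨hem, ham, hbm, hcm, _⟩ := hinv m
    obtain ⟨hen, han, hbn, hcn, _⟩ := hinv n
    have hm := sum_abs_eq (e := (seq m).1) (a := (seq m).2.1) (b := (seq m).2.2.1)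
      (c := (seq m).2.2.2) hem ham.le hbm.le hcm.le
    have hn := sum_abs_eq (e := (seq n).1) (a := (seq n).2.1) (b := (seq n).2.2.1)
      (c := (seq n).2.2.2) hen han.le hbn.le hcn.le
    show sumT (seq m) = sumT (seq n)
    simp only at hmn
    rw [sumT, sumT, ← hm, ← hn]
    show |Ms (seq m) 0 1| + |Ms (seq m) 1 2| + |Ms (seq m) 2 0| =
      |Ms (seq n) 0 1| + |Ms (seq n) 1 2| + |Ms (seq n) 2 0|
    rw [hmn]
  by_cases hasc : 2 ≤ a ∧ 2 ≤ b ∧ 2 ≤ c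
  · obtain ⟨ha2, hb2, hc2⟩ := hasc
    have hs0 : 6 < sumT t0 := by
      by_contra hle
      push_neg at hle
      have hst : sumT t0 = a + b + c := rfl
      rw [hst] at hle
      exact hne ⟨by linarith, by linarith, by linarith⟩
    have hreg : ∀ n, (2 ≤ (seq n).2.1 ∧ 2 ≤ (seq n).2.2.1 ∧ 2 ≤ (seq n).2.2.2) ∧
        6 < sumT (seq n) := by
      intro n
      induction n with
      | zero => exact ⟨⟨ha2, hb2, hc2⟩, hs0⟩
      | succ n ih =>
        have h := asc_step (seq n) ih.1 ih.2
        rw [hseqS]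
        exact ⟨h.1, by linarith [h.2, ih.2]⟩
    have hmono : StrictMono (fun n => sumT (seq n)) := by
      apply strictMono_nat_of_lt_succ
      intro n
      have h := asc_step (seq n) (hreg n).1 (hreg n).2
      simpa [hseqS n] using h.2
    exact hfinal hmono.injective
  · have hdesc : a < 2 ∨ b < 2 ∨ c < 2 := by
      rcases not_and_or.1 hasc with h | h
      · exact Or.inl (lt_of_not_ge h)
      · rcases not_and_or.1 h with h' | h'
        · exact Or.inr (Or.inl (lt_of_not_ge h'))
        · exact Or.inr (Or.inr (lt_of_not_ge h'))
    have hreg : ∀ n, (seq n).2.1 < 2 ∨ (seq n).2.2.1 < 2 ∨ (seq n).2.2.2 < 2 := by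
      intro n
      induction n with
      | zero => exact hdesc
      | succ n ih =>
        have hi := hinv n
        have h := desc_step (seq n) hi.2.1 hi.2.2.1 hi.2.2.2.1 ih
        rw [hseqS]
        exact h.1
    have hmono : StrictAnti (fun n => sumT (seq n)) := by
      apply strictAnti_nat_of_succ_lt
      intro n
      have hi := hinv n
      have h := desc_step (seq n) hi.2.1 hi.2.2.1 hi.2.2.2.1 (hreg n)
      simpa [hseqS n] using h.2
    exact hfinal hmono.injective
end
end

section
/- Let B be a mutation-acyclic real skew-symmetric 3×3 matrix with 0 < C(B) < 4. Then there exists a finite sequence of mutation indices k_1, …, k_m with m ≤ ⌊π / arcsin(√(4 − C(B))/2)⌋ such that the matrix μ_{k_m}(⋯(μ_{k_1}(B))⋯) is acyclic. -/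
open Matrix
noncomputable section

-- ===== auxiliary development =====
open Real

def Mk (a b c : ℝ) : Matrix (Fin 3) (Fin 3) ℝ := !![0, a, -c; -a, 0, b; c, -b, 0]

lemma skew_eq_Mk (B : Matrix (Fin 3) (Fin 3) ℝ) (hB : Bᵀ = -B) :
    B = Mk (B 0 1) (B 1 2) (B 2 0) := by
  have h : ∀ i j, B j i = -B i j := fun i j => by
    have := congrFun (congrFun hB i) j
    simpa [Matrix.transpose_apply] using this
  funext i j
  fin_cases i <;> fin_cases j <;>
    simp [Mk, h 0 1, h 1 2, h 2 0] <;> linarith [h 0 0, h 1 1, h 2 2]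

lemma mutate0 (a b c : ℝ) :
    mutate 0 (Mk a b c) = Mk (-a) (b - (|a| * c + a * |c|)/2) (-c) := by
  funext i j
  fin_cases i <;> fin_cases j <;>
    simp [mutate, Mk, abs_neg] <;> ring

lemma mutate1 (a b c : ℝ) :
    mutate 1 (Mk a b c) = Mk (-a) (-b) (c - (|a| * b + a * |b|)/2) := by
  funext i j
  fin_cases i <;> fin_cases j <;>
    simp [mutate, Mk, abs_neg, Fin.ext_iff] <;> ring

lemma mutate2 (a b c : ℝ) :
    mutate 2 (Mk a b c) = Mk (a - (|b| * c + b * |c|)/2) (-b) (-c) := by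
  funext i j
  fin_cases i <;> fin_cases j <;>
    simp [mutate, Mk, abs_neg, Fin.ext_iff] <;> ring

lemma Mk_neg (a b c : ℝ) : -Mk a b c = Mk (-a) (-b) (-c) := by
  funext i j; fin_cases i <;> fin_cases j <;> simp [Mk]

lemma cyclic_Mk (a b c : ℝ) :
    IsCyclicMat (Mk a b c) ↔ (0 < a ∧ 0 < b ∧ 0 < c) ∨ (a < 0 ∧ b < 0 ∧ c < 0) := Iff.rfl

lemma markov_Mk (a b c : ℝ) :
    markov (Mk a b c) = a ^ 2 + b ^ 2 + c ^ 2 -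
      (if IsCyclicMat (Mk a b c) then 1 else -1) * |a * b * c| := rfl

lemma markov_Mk_pos (a b c : ℝ) (ha : 0 < a) (hb : 0 < b) (hc : 0 < c) :
    markov (Mk a b c) = a ^ 2 + b ^ 2 + c ^ 2 - a * b * c := by
  rw [markov_Mk, if_pos (by exact Or.inl ⟨ha, hb, hc⟩), abs_of_pos (by positivity)]
  ring

lemma markov_Mk_neg3 (a b c : ℝ) (ha : a < 0) (hb : b < 0) (hc : c < 0) :
    markov (Mk a b c) = a ^ 2 + b ^ 2 + c ^ 2 + a * b * c := by
  rw [markov_Mk, if_pos (by exact Or.inr ⟨ha, hb, hc⟩),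
    abs_of_neg (mul_neg_of_pos_of_neg (mul_pos_of_neg_of_neg ha hb) hc)]
  ring

lemma perm_cases (σ : Equiv.Perm (Fin 3)) :
    (σ 0 = 0 ∧ σ 1 = 1 ∧ σ 2 = 2) ∨ (σ 0 = 1 ∧ σ 1 = 2 ∧ σ 2 = 0) ∨
    (σ 0 = 2 ∧ σ 1 = 0 ∧ σ 2 = 1) ∨ (σ 0 = 1 ∧ σ 1 = 0 ∧ σ 2 = 2) ∨
    (σ 0 = 0 ∧ σ 1 = 2 ∧ σ 2 = 1) ∨ (σ 0 = 2 ∧ σ 1 = 1 ∧ σ 2 = 0) := by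
  have h3 : ∀ x : Fin 3, x = 0 ∨ x = 1 ∨ x = 2 := by decide
  have inj := σ.injective
  rcases h3 (σ 0) with h0|h0|h0 <;> rcases h3 (σ 1) with h1|h1|h1 <;>
    rcases h3 (σ 2) with h2|h2|h2 <;>
    first
      | (exact absurd (inj (h0.trans h1.symm)) (by decide))
      | (exact absurd (inj (h0.trans h2.symm)) (by decide))
      | (exact absurd (inj (h1.trans h2.symm)) (by decide))
      | simp [h0, h1, h2]

lemma perm_Mk (a b c : ℝ) (σ : Equiv.Perm (Fin 3)) :
    (Matrix.of fun i j => Mk a b c (σ i) (σ j)) = Mk a b c ∨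
    (Matrix.of fun i j => Mk a b c (σ i) (σ j)) = Mk b c a ∨
    (Matrix.of fun i j => Mk a b c (σ i) (σ j)) = Mk c a b ∨
    (Matrix.of fun i j => Mk a b c (σ i) (σ j)) = Mk (-a) (-c) (-b) ∨
    (Matrix.of fun i j => Mk a b c (σ i) (σ j)) = Mk (-c) (-b) (-a) ∨
    (Matrix.of fun i j => Mk a b c (σ i) (σ j)) = Mk (-b) (-a) (-c) := by
  rcases perm_cases σ with ⟨h0,h1,h2⟩|⟨h0,h1,h2⟩|⟨h0,h1,h2⟩|⟨h0,h1,h2⟩|⟨h0,h1,h2⟩|⟨h0,h1,h2⟩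
  · left; funext i j; fin_cases i <;> fin_cases j <;> simp [Mk, h0, h1, h2]
  · right; left; funext i j; fin_cases i <;> fin_cases j <;> simp [Mk, h0, h1, h2]
  · right; right; left; funext i j; fin_cases i <;> fin_cases j <;> simp [Mk, h0, h1, h2]
  · right; right; right; left; funext i j; fin_cases i <;> fin_cases j <;> simp [Mk, h0, h1, h2]
  · right; right; right; right; left
    funext i j; fin_cases i <;> fin_cases j <;> simp [Mk, h0, h1, h2]
  · right; right; right; right; right
    funext i j; fin_cases i <;> fin_cases j <;> simp [Mk, h0, h1, h2]

/-- Invariant for mutation-cyclic matrices with big entries. -/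
def Qinv (B : Matrix (Fin 3) (Fin 3) ℝ) : Prop :=
  ∃ (a b c ε : ℝ), (ε = 1 ∨ ε = -1) ∧ B = Mk (ε*a) (ε*b) (ε*c) ∧
    2 ≤ a ∧ 2 ≤ b ∧ 2 ≤ c ∧ a^2 + b^2 + c^2 - a*b*c < 4

lemma key_ineq (a b c : ℝ) (ha : 2 ≤ a) (hb : 2 ≤ b) (hc : 2 ≤ c)
    (h : a^2 + b^2 + c^2 - a*b*c < 4) : 2 ≤ a*b - c := by
  by_contra hcon
  push_neg at hcon
  nlinarith [sq_nonneg (a - b), mul_nonneg (by linarith : (0:ℝ) ≤ 2 - (a*b - c))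
    (by nlinarith : (0:ℝ) ≤ a*b - ((a*b - c) + 2))]

lemma Qinv_cyclic (B : Matrix (Fin 3) (Fin 3) ℝ) (h : Qinv B) : IsCyclicMat B := by
  obtain ⟨a, b, c, ε, hε, rfl, ha, hb, hc, _⟩ := h
  rw [cyclic_Mk]
  rcases hε with rfl | rfl
  · exact Or.inl ⟨by linarith, by linarith, by linarith⟩
  · exact Or.inr ⟨by linarith, by linarith, by linarith⟩

lemma Qinv_step (B B' : Matrix (Fin 3) (Fin 3) ℝ) (h : MutationStep B B') (hQ : Qinv B) :
    Qinv B' := by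
  obtain ⟨a, b, c, ε, hε, rfl, ha, hb, hc, hm⟩ := hQ
  have habs : ∀ x : ℝ, 0 ≤ x → |ε * x| = x := fun x hx => by
    rcases hε with rfl | rfl
    · rw [one_mul, abs_of_nonneg hx]
    · rw [neg_one_mul, abs_neg, abs_of_nonneg hx]
  have hεneg : -ε = 1 ∨ -ε = -1 := by rcases hε with rfl | rfl <;> norm_num
  rcases h with ⟨k, rfl⟩ | ⟨σ, rfl⟩
  · have h3 : ∀ x : Fin 3, x = 0 ∨ x = 1 ∨ x = 2 := by decide
    rcases h3 k with rfl | rfl | rfl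
    · -- mutate 0 : b-slot becomes εb - ε a c
      rw [mutate0]
      refine ⟨a, a*c - b, c, -ε, hεneg, ?_, ha, key_ineq a c b ha hc hb (by linarith), hc, by nlinarith⟩
      rw [habs _ (by linarith), habs _ (by linarith)]
      congr 1 <;> ring
    · rw [mutate1]
      refine ⟨a, b, a*b - c, -ε, hεneg, ?_, ha, hb, key_ineq a b c ha hb hc hm, by nlinarith⟩
      rw [habs _ (by linarith), habs _ (by linarith)]
      congr 1 <;> ring
    · rw [mutate2]
      refine ⟨b*c - a, b, c, -ε, hεneg, ?_, key_ineq b c a hb hc ha (by nlinarith), hb, hc, by nlinarith⟩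
      rw [habs _ (by linarith), habs _ (by linarith)]
      congr 1 <;> ring
  · rcases perm_Mk (ε*a) (ε*b) (ε*c) σ with h6|h6|h6|h6|h6|h6 <;> rw [h6]
    · exact ⟨a, b, c, ε, hε, rfl, ha, hb, hc, hm⟩
    · exact ⟨b, c, a, ε, hε, rfl, hb, hc, ha, by nlinarith⟩
    · exact ⟨c, a, b, ε, hε, rfl, hc, ha, hb, by nlinarith⟩
    · exact ⟨a, c, b, -ε, hεneg, by congr 1 <;> ring, ha, hc, hb, by nlinarith⟩
    · exact ⟨c, b, a, -ε, hεneg, by congr 1 <;> ring, hc, hb, ha, by nlinarith⟩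
    · exact ⟨b, a, c, -ε, hεneg, by congr 1 <;> ring, hb, ha, hc, by nlinarith⟩

lemma Qinv_equiv (B B' : Matrix (Fin 3) (Fin 3) ℝ) (h : MutationEquiv B B') (hQ : Qinv B) :
    Qinv B' := by
  induction h with
  | refl => exact hQ
  | tail _ hstep ih => exact Qinv_step _ _ hstep ih

def seq (d y0 y1 : ℝ) : ℕ → ℝ
  | 0 => y0
  | 1 => y1
  | (n+2) => d * seq d y0 y1 (n+1) - seq d y0 y1 n

lemma seq_closed (d y0 y1 : ℝ) (h0 : 0 < y0) (h1 : 0 < y1) (hd0 : 0 < d) (hd2 : d < 2) :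
    ∃ r δ, 0 < r ∧ 0 < δ ∧ δ < π ∧
      ∀ n : ℕ, seq d y0 y1 n = r * Real.sin (δ + n * Real.arccos (d/2)) := by
  set φ := Real.arccos (d/2) with hφ
  have hcos : Real.cos φ = d/2 := Real.cos_arccos (by linarith) (by linarith)
  set t := (y1/y0 - d/2)/Real.sin φ with ht
  set δ := π/2 - Real.arctan t with hδ
  have hsinδ : Real.sin δ = 1/Real.sqrt (1 + t^2) := by
    rw [hδ, Real.sin_pi_div_two_sub, Real.cos_arctan]
  have hsqrt : 0 < Real.sqrt (1 + t^2) := Real.sqrt_pos.2 (by positivity)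
  have hsinδpos : 0 < Real.sin δ := by rw [hsinδ]; positivity
  have hcosδ : Real.cos δ = t/Real.sqrt (1 + t^2) := by
    rw [hδ, Real.cos_pi_div_two_sub, Real.sin_arctan]
  have hδ0 : 0 < δ := by
    have := Real.arctan_lt_pi_div_two t
    rw [hδ]; linarith
  have hδπ : δ < π := by
    have := Real.neg_pi_div_two_lt_arctan t
    rw [hδ]; linarith [Real.pi_pos]
  have hφhalf : φ < π/2 := Real.arccos_lt_pi_div_two.2 (by linarith)
  have hφ0 : 0 < φ := Real.arccos_pos.2 (by linarith)
  have hsinφ : 0 < Real.sin φ :=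
    Real.sin_pos_of_pos_of_lt_pi hφ0 (by linarith [Real.pi_pos])
  set r := y0 / Real.sin δ with hr
  have hrpos : 0 < r := div_pos h0 hsinδpos
  refine ⟨r, δ, hrpos, hδ0, hδπ, ?_⟩
  have e0 : r * Real.sin (δ + (0:ℕ) * φ) = seq d y0 y1 0 := by
    simp [seq, hr, div_mul_cancel₀ _ (ne_of_gt hsinδpos)]
  have hrcosδ : r * Real.cos δ = y0 * t := by
    rw [hr, hcosδ, hsinδ]
    field_simp
  have e1 : r * Real.sin (δ + (1:ℕ) * φ) = seq d y0 y1 1 := by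
    push_cast
    rw [one_mul, Real.sin_add, mul_add, ← mul_assoc, ← mul_assoc, hcos]
    have hy0 : r * Real.sin δ = y0 := by
      rw [hr, div_mul_cancel₀ _ (ne_of_gt hsinδpos)]
    rw [hy0, hrcosδ, ht]
    field_simp
    simp [seq]
  have key : ∀ n : ℕ, seq d y0 y1 n = r * Real.sin (δ + n * φ) ∧
      seq d y0 y1 (n+1) = r * Real.sin (δ + (n+1 : ℕ) * φ) := by
    intro n
    induction n with
    | zero => exact ⟨e0.symm, e1.symm⟩
    | succ n ih =>
      refine ⟨ih.2, ?_⟩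
      have recur : seq d y0 y1 (n+2) = d * seq d y0 y1 (n+1) - seq d y0 y1 n := rfl
      rw [recur, ih.1, ih.2]
      have harg : (δ + ((n+2 : ℕ) : ℝ) * φ) = (δ + ((n+1 : ℕ) : ℝ) * φ) + φ := by
        push_cast; ring
      have harg2 : (δ + (n : ℝ) * φ) = (δ + ((n+1 : ℕ) : ℝ) * φ) - φ := by
        push_cast; ring
      have sinrec : ∀ A B : ℝ, Real.sin (A + B) = 2 * Real.sin A * Real.cos B - Real.sin (A - B) := by
        intro A B; rw [Real.sin_add, Real.sin_sub]; ring
      rw [harg, harg2, sinrec (δ + ((n+1 : ℕ) : ℝ) * φ) φ, hcos]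
      ring
  exact fun n => (key n).1

lemma sin_nonpos_pi_two_pi {x : ℝ} (h1 : π ≤ x) (h2 : x ≤ 2*π) : Real.sin x ≤ 0 := by
  have : Real.sin (x - π) = -Real.sin x := Real.sin_sub_pi x ▸ rfl
  have hpos : 0 ≤ Real.sin (x - π) :=
    Real.sin_nonneg_of_nonneg_of_le_pi (by linarith) (by linarith)
  rw [Real.sin_sub_pi] at hpos
  linarith

lemma steps_bound (r δ φ : ℝ) (hr : 0 < r) (hδ0 : 0 < δ) (hδπ : δ < π)
    (hφ0 : 0 < φ) (hφπ : φ < π) (m : ℕ)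
    (hpos : ∀ j : ℕ, j ≤ m → 0 < r * Real.sin (δ + j * φ)) :
    (m : ℝ) * φ ≤ π := by
  by_contra hcon
  push_neg at hcon
  classical
  have hex : ∃ j : ℕ, π ≤ δ + j * φ := ⟨m, by linarith⟩
  let j0 := Nat.find hex
  have hj0 : j0 = Nat.find hex := rfl
  have hj0spec : π ≤ δ + j0 * φ := Nat.find_spec hex
  have hj0pos : j0 ≠ 0 := by
    intro h
    have := hj0spec
    rw [h] at this
    push_cast at this
    linarith
  have hj0le : j0 ≤ m := Nat.find_min' hex (by linarith)
  have hj1 : j0 - 1 + 1 = j0 := Nat.succ_pred_eq_of_pos (Nat.pos_of_ne_zero hj0pos)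
  have hprev : ¬ π ≤ δ + (j0 - 1 : ℕ) * φ := by
    rw [hj0]
    exact Nat.find_min hex (by omega)
  push_neg at hprev
  have hcast : ((j0 : ℝ)) = ((j0 - 1 : ℕ) : ℝ) + 1 := by
    exact_mod_cast hj1.symm
  have hupper : δ + (j0 : ℕ) * φ ≤ 2 * π := by
    rw [hcast]; push_cast; linarith
  have hsin : Real.sin (δ + (j0 : ℕ) * φ) ≤ 0 := sin_nonpos_pi_two_pi hj0spec hupper
  have := hpos j0 hj0le
  nlinarith

lemma descent_core (d y0 y1 : ℝ) (h0 : 0 < y0) (h1 : 0 < y1) (hd0 : 0 < d) (hd2 : d < 2) :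
    ∃ m : ℕ, (∀ j, j ≤ m → 0 < seq d y0 y1 j) ∧ seq d y0 y1 (m+1) ≤ 0 ∧
      (m : ℝ) * Real.arccos (d/2) ≤ π := by
  classical
  obtain ⟨r, δ, hr, hδ0, hδπ, hcf⟩ := seq_closed d y0 y1 h0 h1 hd0 hd2
  have hφhalf : Real.arccos (d/2) < π/2 := Real.arccos_lt_pi_div_two.2 (by linarith)
  have hφ0 : 0 < Real.arccos (d/2) := Real.arccos_pos.2 (by linarith)
  have hφπ : Real.arccos (d/2) < π := by linarith [Real.pi_pos]
  have hex : ∃ n, seq d y0 y1 n ≤ 0 := by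
    by_contra hall
    push_neg at hall
    obtain ⟨m, hm⟩ := exists_nat_gt (π / Real.arccos (d/2))
    have hb := steps_bound r δ _ hr hδ0 hδπ hφ0 hφπ m
      (fun j _ => by rw [← hcf]; exact hall j)
    rw [div_lt_iff₀ hφ0] at hm
    linarith
  have hN0 : Nat.find hex ≠ 0 := by
    intro h
    have := Nat.find_spec hex
    rw [h] at this
    simp only [seq] at this
    linarith
  obtain ⟨m, hm⟩ : ∃ m, Nat.find hex = m + 1 :=
    ⟨Nat.find hex - 1, (Nat.succ_pred_eq_of_pos (Nat.pos_of_ne_zero hN0)).symm⟩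
  have hposj : ∀ j, j ≤ m → 0 < seq d y0 y1 j := fun j hj => by
    have := Nat.find_min hex (show j < Nat.find hex by omega)
    linarith [lt_of_not_ge this]
  refine ⟨m, hposj, by rw [← hm]; exact Nat.find_spec hex, ?_⟩
  exact steps_bound r δ _ hr hδ0 hδπ hφ0 hφπ m
    (fun j hj => by rw [← hcf]; exact hposj j hj)

lemma count_bound (d C : ℝ) (hd0 : 0 < d) (hd2 : d < 2) (hdC : d^2 ≤ C) (hC4 : C < 4)
    (m : ℕ) (hm : (m : ℝ) * Real.arccos (d/2) ≤ π) :
    m ≤ ⌊π / Real.arcsin (Real.sqrt (4 - C) / 2)⌋₊ := by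
  set φ := Real.arccos (d/2) with hφ
  set s := Real.sqrt (4 - C) / 2 with hs
  have hφ0 : 0 < φ := Real.arccos_pos.2 (by linarith)
  have hs0 : 0 < s := by
    rw [hs]
    have : 0 < Real.sqrt (4 - C) := Real.sqrt_pos.2 (by linarith)
    linarith
  have hθ0 : 0 < Real.arcsin s := Real.arcsin_pos.2 hs0
  have hsinφ : Real.sin φ = Real.sqrt (1 - (d/2)^2) := Real.sin_arccos _
  have hsle : s ≤ Real.sin φ := by
    rw [hsinφ, hs]
    rw [Real.le_sqrt (by positivity) (by nlinarith)]
    rw [div_pow, Real.sq_sqrt (by linarith : (0:ℝ) ≤ 4 - C)]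
    nlinarith
  have hθφ : Real.arcsin s ≤ φ := by
    calc Real.arcsin s ≤ Real.arcsin (Real.sin φ) := Real.monotone_arcsin hsle
    _ = φ := Real.arcsin_sin (by linarith [Real.arccos_le_pi_div_two (x := d/2), Real.pi_pos]
        : -(π/2) ≤ φ) (by linarith [Real.arccos_le_pi_div_two.2 (by linarith : 0 ≤ d/2)])
  apply Nat.le_floor
  calc (m : ℝ) ≤ π / φ := by rw [le_div_iff₀ hφ0]; exact hm
  _ ≤ π / Real.arcsin s :=
    (div_le_div_iff_of_pos_left Real.pi_pos hφ0 hθ0).2 hθφ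

def altKs (k1 k2 : Fin 3) (m : ℕ) : List (Fin 3) :=
  (List.range m).map (fun i => if i % 2 = 0 then k1 else k2)

lemma altKs_length (k1 k2 : Fin 3) (m : ℕ) : (altKs k1 k2 m).length = m := by
  simp [altKs]

lemma altKs_succ (k1 k2 : Fin 3) (m : ℕ) :
    altKs k1 k2 (m+1) = altKs k1 k2 m ++ [if m % 2 = 0 then k1 else k2] := by
  simp [altKs, List.range_succ]

lemma stateC (a b c : ℝ) (ha : 0 < a) (hb : 0 < b) (hc : 0 < c) :
    ∀ m : ℕ, (∀ j, j ≤ m → 0 < seq c b a j) →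
      (altKs 0 2 m).foldl (fun M k => mutate k M) (Mk a b c) =
        if m % 2 = 0 then Mk (seq c b a (m+1)) (seq c b a m) c
        else -Mk (seq c b a m) (seq c b a (m+1)) c := by
  intro m
  induction m with
  | zero => intro _; simp [seq, altKs]
  | succ m ih =>
    intro hpos
    rw [altKs_succ, List.foldl_append, ih (fun j hj => hpos j (by omega))]
    simp only [List.foldl_cons, List.foldl_nil]
    have hym : 0 < seq c b a m := hpos m (by omega)
    have hym1 : 0 < seq c b a (m+1) := hpos (m+1) (by omega)
    have hrec : seq c b a (m+1+1) = c * seq c b a (m+1) - seq c b a m := rfl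
    rcases Nat.even_or_odd m with he | ho
    · have h2 : m % 2 = 0 := Nat.even_iff.1 he
      have h2' : (m+1) % 2 = 1 := by omega
      rw [if_pos h2, if_pos h2, if_neg (by omega : ¬ (m+1) % 2 = 0)]
      rw [mutate0, Mk_neg, abs_of_pos hym1, abs_of_pos hc, hrec]
      ring_nf
    · have h2 : m % 2 = 1 := Nat.odd_iff.1 ho
      rw [if_neg (by omega), if_neg (by omega), if_pos (by omega : (m+1) % 2 = 0)]
      rw [Mk_neg, mutate2,
        abs_of_neg (by linarith : -seq c b a (m+1) < 0), abs_of_neg (by linarith : -c < 0), hrec]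
      ring_nf

lemma caseC (a b c : ℝ) (ha : 0 < a) (hb : 0 < b) (hc : 0 < c) (hc2 : c < 2) :
    ∃ ks : List (Fin 3), ((ks.length : ℝ) * Real.arccos (c/2) ≤ π) ∧
      ¬ IsCyclicMat (ks.foldl (fun M k => mutate k M) (Mk a b c)) := by
  obtain ⟨m, hpos, hnp, hbound⟩ := descent_core c b a hb ha hc hc2
  refine ⟨altKs 0 2 m, by rwa [altKs_length], ?_⟩
  rw [stateC a b c ha hb hc m hpos]
  have hym : 0 < seq c b a m := hpos m (by omega)
  rcases Nat.even_or_odd m with he | ho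
  · rw [if_pos (Nat.even_iff.1 he)]
    rw [cyclic_Mk]
    rintro (⟨h1, h2, h3⟩ | ⟨h1, h2, h3⟩) <;> linarith
  · have h2 : m % 2 = 1 := Nat.odd_iff.1 ho
    rw [if_neg (by omega : ¬ m % 2 = 0), Mk_neg, cyclic_Mk]
    rintro (⟨h1, h2, h3⟩ | ⟨h1, h2, h3⟩) <;> linarith

lemma stateA (a b c : ℝ) (ha : 0 < a) (hb : 0 < b) (hc : 0 < c) :
    ∀ m : ℕ, (∀ j, j ≤ m → 0 < seq a b c j) →
      (altKs 0 1 m).foldl (fun M k => mutate k M) (Mk a b c) =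
        if m % 2 = 0 then Mk a (seq a b c m) (seq a b c (m+1))
        else -Mk a (seq a b c (m+1)) (seq a b c m) := by
  intro m
  induction m with
  | zero => intro _; simp [seq, altKs]
  | succ m ih =>
    intro hpos
    rw [altKs_succ, List.foldl_append, ih (fun j hj => hpos j (by omega))]
    simp only [List.foldl_cons, List.foldl_nil]
    have hym : 0 < seq a b c m := hpos m (by omega)
    have hym1 : 0 < seq a b c (m+1) := hpos (m+1) (by omega)
    have hrec : seq a b c (m+1+1) = a * seq a b c (m+1) - seq a b c m := rfl
    rcases Nat.even_or_odd m with he | ho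
    · have h2 : m % 2 = 0 := Nat.even_iff.1 he
      rw [if_pos h2, if_pos h2, if_neg (by omega : ¬ (m+1) % 2 = 0)]
      rw [mutate0, Mk_neg, abs_of_pos ha, abs_of_pos hym1, hrec]
      ring_nf
    · have h2 : m % 2 = 1 := Nat.odd_iff.1 ho
      rw [if_neg (by omega), if_neg (by omega), if_pos (by omega : (m+1) % 2 = 0)]
      rw [Mk_neg, mutate1,
        abs_of_neg (by linarith : -a < 0), abs_of_neg (by linarith : -seq a b c (m+1) < 0), hrec]
      ring_nf

lemma caseA (a b c : ℝ) (ha : 0 < a) (hb : 0 < b) (hc : 0 < c) (ha2 : a < 2) :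
    ∃ ks : List (Fin 3), ((ks.length : ℝ) * Real.arccos (a/2) ≤ π) ∧
      ¬ IsCyclicMat (ks.foldl (fun M k => mutate k M) (Mk a b c)) := by
  obtain ⟨m, hpos, hnp, hbound⟩ := descent_core a b c hb hc ha ha2
  refine ⟨altKs 0 1 m, by rwa [altKs_length], ?_⟩
  rw [stateA a b c ha hb hc m hpos]
  have hym : 0 < seq a b c m := hpos m (by omega)
  rcases Nat.even_or_odd m with he | ho
  · rw [if_pos (Nat.even_iff.1 he), cyclic_Mk]
    rintro (⟨h1, h2, h3⟩ | ⟨h1, h2, h3⟩) <;> linarith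
  · have h2 : m % 2 = 1 := Nat.odd_iff.1 ho
    rw [if_neg (by omega : ¬ m % 2 = 0), Mk_neg, cyclic_Mk]
    rintro (⟨h1, h2, h3⟩ | ⟨h1, h2, h3⟩) <;> linarith

lemma stateB (a b c : ℝ) (ha : 0 < a) (hb : 0 < b) (hc : 0 < c) :
    ∀ m : ℕ, (∀ j, j ≤ m → 0 < seq b c a j) →
      (altKs 1 2 m).foldl (fun M k => mutate k M) (Mk a b c) =
        if m % 2 = 0 then Mk (seq b c a (m+1)) b (seq b c a m)
        else -Mk (seq b c a m) b (seq b c a (m+1)) := by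
  intro m
  induction m with
  | zero => intro _; simp [seq, altKs]
  | succ m ih =>
    intro hpos
    rw [altKs_succ, List.foldl_append, ih (fun j hj => hpos j (by omega))]
    simp only [List.foldl_cons, List.foldl_nil]
    have hym : 0 < seq b c a m := hpos m (by omega)
    have hym1 : 0 < seq b c a (m+1) := hpos (m+1) (by omega)
    have hrec : seq b c a (m+1+1) = b * seq b c a (m+1) - seq b c a m := rfl
    rcases Nat.even_or_odd m with he | ho
    · have h2 : m % 2 = 0 := Nat.even_iff.1 he
      rw [if_pos h2, if_pos h2, if_neg (by omega : ¬ (m+1) % 2 = 0)]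
      rw [mutate1, Mk_neg, abs_of_pos hym1, abs_of_pos hb, hrec]
      ring_nf
    · have h2 : m % 2 = 1 := Nat.odd_iff.1 ho
      rw [if_neg (by omega), if_neg (by omega), if_pos (by omega : (m+1) % 2 = 0)]
      rw [Mk_neg, mutate2,
        abs_of_neg (by linarith : -b < 0), abs_of_neg (by linarith : -seq b c a (m+1) < 0), hrec]
      ring_nf

lemma caseB (a b c : ℝ) (ha : 0 < a) (hb : 0 < b) (hc : 0 < c) (hb2 : b < 2) :
    ∃ ks : List (Fin 3), ((ks.length : ℝ) * Real.arccos (b/2) ≤ π) ∧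
      ¬ IsCyclicMat (ks.foldl (fun M k => mutate k M) (Mk a b c)) := by
  obtain ⟨m, hpos, hnp, hbound⟩ := descent_core b c a hc ha hb hb2
  refine ⟨altKs 1 2 m, by rwa [altKs_length], ?_⟩
  rw [stateB a b c ha hb hc m hpos]
  have hym : 0 < seq b c a m := hpos m (by omega)
  rcases Nat.even_or_odd m with he | ho
  · rw [if_pos (Nat.even_iff.1 he), cyclic_Mk]
    rintro (⟨h1, h2, h3⟩ | ⟨h1, h2, h3⟩) <;> linarith
  · have h2 : m % 2 = 1 := Nat.odd_iff.1 ho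
    rw [if_neg (by omega : ¬ m % 2 = 0), Mk_neg, cyclic_Mk]
    rintro (⟨h1, h2, h3⟩ | ⟨h1, h2, h3⟩) <;> linarith

lemma mutate_neg (k : Fin 3) (B : Matrix (Fin 3) (Fin 3) ℝ) :
    mutate k (-B) = -(mutate k B) := by
  funext i j
  by_cases h : i = k ∨ j = k <;>
    simp [mutate, h, Matrix.neg_apply, abs_neg] <;> ring

lemma foldl_mutate_neg (ks : List (Fin 3)) (B : Matrix (Fin 3) (Fin 3) ℝ) :
    ks.foldl (fun M k => mutate k M) (-B) = -(ks.foldl (fun M k => mutate k M) B) := by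
  induction ks generalizing B with
  | nil => rfl
  | cons k ks ih => simp only [List.foldl_cons, mutate_neg, ih]

lemma cyclic_neg (B : Matrix (Fin 3) (Fin 3) ℝ) :
    IsCyclicMat (-B) ↔ IsCyclicMat B := by
  simp only [IsCyclicMat, Matrix.neg_apply, neg_pos, neg_lt_zero]
  tauto

/-- a mutation-acyclic matrix with `0 < C(B) < 4` can be turned into
an acyclic one in at most `⌊π / arcsin(√(4 - C(B))/2)⌋` mutations. -/
theorem acyclic_within_bounded_mutations
    (B : Matrix (Fin 3) (Fin 3) ℝ) (hB : Bᵀ = -B)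
    (hac : IsMutationAcyclic B) (h0 : 0 < markov B) (h4 : markov B < 4) :
    ∃ ks : List (Fin 3),
      ks.length ≤ ⌊Real.pi / Real.arcsin (Real.sqrt (4 - markov B) / 2)⌋₊ ∧
      ¬ IsCyclicMat (ks.foldl (fun M k => mutate k M) B) := by
  by_cases hcyc : IsCyclicMat B
  case neg => exact ⟨[], Nat.zero_le _, by simpa using hcyc⟩
  have hBM : B = Mk (B 0 1) (B 1 2) (B 2 0) := skew_eq_Mk B hB
  set a := B 0 1 with ha'
  set b := B 1 2 with hb'
  set c := B 2 0 with hc'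
  rcases hcyc with ⟨hA, hBp, hC⟩ | ⟨hA, hBp, hC⟩
  · -- positive cyclic case
    have hmB : markov B = a^2 + b^2 + c^2 - a*b*c := by
      rw [hBM]; exact markov_Mk_pos a b c hA hBp hC
    by_cases h2a : a < 2
    · obtain ⟨ks, hlen, hncyc⟩ := caseA a b c hA hBp hC h2a
      exact ⟨ks, count_bound a (markov B) hA h2a (by rw [hmB]; nlinarith [sq_nonneg (b - c), mul_pos hBp hC]) h4 ks.length hlen,
        by rwa [hBM]⟩
    by_cases h2b : b < 2
    · obtain ⟨ks, hlen, hncyc⟩ := caseB a b c hA hBp hC h2b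
      exact ⟨ks, count_bound b (markov B) hBp h2b (by rw [hmB]; nlinarith [sq_nonneg (a - c), mul_pos hA hC]) h4 ks.length hlen,
        by rwa [hBM]⟩
    by_cases h2c : c < 2
    · obtain ⟨ks, hlen, hncyc⟩ := caseC a b c hA hBp hC h2c
      exact ⟨ks, count_bound c (markov B) hC h2c (by rw [hmB]; nlinarith [sq_nonneg (a - b), mul_pos hA hBp]) h4 ks.length hlen,
        by rwa [hBM]⟩
    · push_neg at h2a h2b h2c
      obtain ⟨B', hequiv, hn⟩ := hac
      have hQ : Qinv B := ⟨a, b, c, 1, Or.inl rfl, by rw [hBM]; norm_num, h2a, h2b, h2c,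
        by rw [hmB] at h4; linarith⟩
      exact absurd (Qinv_cyclic B' (Qinv_equiv B B' hequiv hQ)) hn
  · -- negative cyclic case
    have hnegB : -B = Mk (-a) (-b) (-c) := by rw [hBM, Mk_neg]
    have hA' : 0 < -a := by linarith
    have hB' : 0 < -b := by linarith
    have hC' : 0 < -c := by linarith
    have hmB : markov B = (-a)^2 + (-b)^2 + (-c)^2 - (-a)*(-b)*(-c) := by
      rw [hBM, markov_Mk_neg3 a b c hA hBp hC]; ring
    by_cases h2a : -a < 2
    · obtain ⟨ks, hlen, hncyc⟩ := caseA (-a) (-b) (-c) hA' hB' hC' h2a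
      rw [← hnegB, foldl_mutate_neg, cyclic_neg] at hncyc
      exact ⟨ks, count_bound (-a) (markov B) hA' h2a (by rw [hmB]; nlinarith [sq_nonneg (b - c), mul_pos hB' hC']) h4 ks.length hlen, hncyc⟩
    by_cases h2b : -b < 2
    · obtain ⟨ks, hlen, hncyc⟩ := caseB (-a) (-b) (-c) hA' hB' hC' h2b
      rw [← hnegB, foldl_mutate_neg, cyclic_neg] at hncyc
      exact ⟨ks, count_bound (-b) (markov B) hB' h2b (by rw [hmB]; nlinarith [sq_nonneg (a - c), mul_pos hA' hC']) h4 ks.length hlen, hncyc⟩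
    by_cases h2c : -c < 2
    · obtain ⟨ks, hlen, hncyc⟩ := caseC (-a) (-b) (-c) hA' hB' hC' h2c
      rw [← hnegB, foldl_mutate_neg, cyclic_neg] at hncyc
      exact ⟨ks, count_bound (-c) (markov B) hC' h2c (by rw [hmB]; nlinarith [sq_nonneg (a - b), mul_pos hA' hB']) h4 ks.length hlen, hncyc⟩
    · push_neg at h2a h2b h2c
      obtain ⟨B', hequiv, hn⟩ := hac
      have hQ : Qinv B := ⟨-a, -b, -c, -1, Or.inr rfl, by rw [hBM]; congr 1 <;> ring,
        h2a, h2b, h2c, by rw [hmB] at h4; nlinarith⟩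
      exact absurd (Qinv_cyclic B' (Qinv_equiv B B' hequiv hQ)) hn
end
end
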